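/- Let X be a real Hilbert space, g : X → X a κ-contraction with 0 ≤ κ < 1, m ≥ 1, and points x_{j−m−1}, …, x_{j−1} ∈ X with residuals w_n := g(x_{n−1}) − x_{n−1} for n = j−m, …, j, all consecutive differences w_n − w_{n−1} nonzero. Suppose (α_{j−m−1}, …, α_{j−1}) ∈ ℝ^{m+1} minimizes ‖Σ_{n=j−m−1}^{j−1} α_n w_{n+1}‖ subject to Σ_n α_n = 1, and set γ_n := Σ_{i=j−m−1}^{n−1} α_i. Then for every p with j−m+1 ≤ p ≤ j, |γ_{p−1}| ‖e_{p−1}‖ ≤ (1 − κ)^{−1} ( Σ_{n=j−m}^{p−2} |α_{n−1}| ‖w_n‖ + |γ_{p−2}| ‖w_{p−1}‖ + |γ_p| ‖w_p‖ + Σ_{n=p+1}^{j} |α_{n−1}| ‖w_n‖ ), where e_{p−1} := x_{p−1} − x_{p−2}. -/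

import Mathlib

open Finset in
private lemma sum_Ioc_split {M : Type*} [AddCommMonoid M] (f : ℤ → M) {a b c : ℤ}
    (h1 : a ≤ b) (h2 : b ≤ c) :
    ∑ i ∈ Finset.Ioc a c, f i = ∑ i ∈ Finset.Ioc a b, f i + ∑ i ∈ Finset.Ioc b c, f i := by
  rw [← Finset.sum_union]
  · rw [Finset.Ioc_union_Ioc_eq_Ioc h1 h2]
  · rw [Finset.disjoint_left]
    intro n hn hn'
    simp only [Finset.mem_Ioc] at hn hn'
    omega

private lemma Icc_eq_Ioc (a b : ℤ) : Finset.Icc a b = Finset.Ioc (a - 1) b := by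
  ext n; simp only [Finset.mem_Icc, Finset.mem_Ioc]; omega

private lemma Ioc_pred_singleton (a : ℤ) : Finset.Ioc (a - 1) a = {a} := by
  ext n; simp only [Finset.mem_Ioc, Finset.mem_singleton]; omega

/-- general-depth Anderson bound: for every `p` with `j-m+1 ≤ p ≤ j`,
`|γ_{p-1}| ‖e_{p-1}‖ ≤ (1-κ)⁻¹ (Σ_{n=j-m}^{p-2} |α_{n-1}| ‖w_n‖ + |γ_{p-2}| ‖w_{p-1}‖ +
  |γ_p| ‖w_p‖ + Σ_{n=p+1}^{j} |α_{n-1}| ‖w_n‖)`. -/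
theorem stmt_6 {X : Type*} [NormedAddCommGroup X] [InnerProductSpace ℝ X] [CompleteSpace X]
    (g : X → X) (κ : ℝ) (hκ0 : 0 ≤ κ) (hκ1 : κ < 1)
    (hg : ∀ x y : X, ‖g y - g x‖ ≤ κ * ‖x - y‖)
    (m : ℕ) (hm : 1 ≤ m) (j : ℤ)
    (x : ℤ → X) (w : ℤ → X)
    (hw : ∀ n, w n = g (x (n - 1)) - x (n - 1))
    (hwne : ∀ n ∈ Finset.Icc (j - (m : ℤ) + 1) j, w n ≠ w (n - 1))
    (α : ℤ → ℝ)
    (hsum : ∑ n ∈ Finset.Icc (j - (m : ℤ) - 1) (j - 1), α n = 1)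
    (hmin : ∀ b : ℤ → ℝ, ∑ n ∈ Finset.Icc (j - (m : ℤ) - 1) (j - 1), b n = 1 →
      ‖∑ n ∈ Finset.Icc (j - (m : ℤ) - 1) (j - 1), α n • w (n + 1)‖ ≤
      ‖∑ n ∈ Finset.Icc (j - (m : ℤ) - 1) (j - 1), b n • w (n + 1)‖)
    (γ : ℤ → ℝ) (hγ : ∀ n, γ n = ∑ i ∈ Finset.Icc (j - (m : ℤ) - 1) (n - 1), α i) :
    ∀ p : ℤ, j - (m : ℤ) + 1 ≤ p → p ≤ j →
      |γ (p - 1)| * ‖x (p - 1) - x (p - 2)‖ ≤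
        (1 - κ)⁻¹ * ((∑ n ∈ Finset.Icc (j - (m : ℤ)) (p - 2), |α (n - 1)| * ‖w n‖) +
          |γ (p - 2)| * ‖w (p - 1)‖ + |γ p| * ‖w p‖ +
          ∑ n ∈ Finset.Icc (p + 1) j, |α (n - 1)| * ‖w n‖) := by
  intro p hp1 hp2
  set a : ℤ := j - (m : ℤ) - 1 with ha
  set v : X := w p - w (p - 1) with hv
  set S : X := ∑ n ∈ Finset.Icc a (j - 1), α n • w (n + 1) with hSdef
  have hκpos : (0:ℝ) < 1 - κ := by linarith
  -- v ≠ 0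
  have hv0 : v ≠ 0 := by
    have := hwne p (by simp only [Finset.mem_Icc]; omega)
    simpa [hv, sub_ne_zero] using this
  have hvnorm : (0:ℝ) < ‖v‖ := norm_pos_iff.mpr hv0
  -- contraction bound
  have hcontr : (1 - κ) * ‖x (p - 1) - x (p - 2)‖ ≤ ‖v‖ := by
    have hvw : v = (g (x (p - 1)) - g (x (p - 2))) - (x (p - 1) - x (p - 2)) := by
      have h1 : w p = g (x (p - 1)) - x (p - 1) := hw p
      have h2 : w (p - 1) = g (x (p - 2)) - x (p - 2) := by
        have := hw (p - 1)
        have e : p - 1 - 1 = p - 2 := by ring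
        rwa [e] at this
      rw [hv, h1, h2]; abel
    have hge : ‖g (x (p - 1)) - g (x (p - 2))‖ ≤ κ * ‖x (p - 1) - x (p - 2)‖ := by
      have := hg (x (p - 2)) (x (p - 1))
      rwa [norm_sub_rev (x (p - 2))] at this
    have htr : ‖x (p - 1) - x (p - 2)‖ ≤ ‖g (x (p - 1)) - g (x (p - 2))‖ + ‖v‖ := by
      have : x (p - 1) - x (p - 2) = (g (x (p - 1)) - g (x (p - 2))) - v := by
        rw [hvw]; abel
      rw [this]
      exact norm_sub_le _ _
    linarith
  -- orthogonality: ⟪S, v⟫ = 0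
  have hperp : (inner ℝ S v : ℝ) = 0 := by
    have hmem1 : p - 1 ∈ Finset.Icc a (j - 1) := by simp only [Finset.mem_Icc]; omega
    have hmem2 : p - 2 ∈ Finset.Icc a (j - 1) := by simp only [Finset.mem_Icc]; omega
    have hne12 : p - 1 ≠ p - 2 := by omega
    have key : ∀ t : ℝ, ‖S‖ ≤ ‖S + t • v‖ := by
      intro t
      set b : ℤ → ℝ := fun n => α n + (if n = p - 1 then t else 0) - (if n = p - 2 then t else 0)
        with hb
      have hbsum : ∑ n ∈ Finset.Icc a (j - 1), b n = 1 := by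
        simp only [hb, Finset.sum_sub_distrib, Finset.sum_add_distrib,
          Finset.sum_ite_eq' (Finset.Icc a (j-1)), hmem1, hmem2, if_pos, hsum]
        ring
      have hbS : ∑ n ∈ Finset.Icc a (j - 1), b n • w (n + 1) = S + t • v := by
        simp only [hb, sub_smul, add_smul, ite_smul, zero_smul,
          Finset.sum_sub_distrib, Finset.sum_add_distrib,
          Finset.sum_ite_eq' (Finset.Icc a (j-1)), hmem1, hmem2, if_pos]
        have e1 : p - 1 + 1 = p := by ring
        have e2 : p - 2 + 1 = p - 1 := by ring
        rw [e1, e2, hv, hSdef]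
        rw [smul_sub]
        abel
      have := hmin b hbsum
      rw [hbS] at this
      exact this
    set c : ℝ := inner ℝ S v with hcdef
    have hv2 : (0:ℝ) < ‖v‖ ^ 2 := by positivity
    have hq : ∀ t : ℝ, 0 ≤ 2 * (t * c) + t ^ 2 * ‖v‖ ^ 2 := by
      intro t
      have h1 := key t
      have expand : ‖S + t • v‖ ^ 2 = ‖S‖ ^ 2 + 2 * (t * c) + t ^ 2 * ‖v‖ ^ 2 := by
        rw [norm_add_sq_real, real_inner_smul_right, norm_smul]
        simp only [Real.norm_eq_abs, mul_pow, sq_abs]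
        rw [hcdef]
      nlinarith [norm_nonneg S, norm_nonneg (S + t • v)]
    have ht := hq (-c / ‖v‖ ^ 2)
    have e : 2 * ((-c / ‖v‖ ^ 2) * c) + (-c / ‖v‖ ^ 2) ^ 2 * ‖v‖ ^ 2 = -(c ^ 2) / ‖v‖ ^ 2 := by
      field_simp
      ring
    rw [e] at ht
    have h0 : 0 ≤ -(c ^ 2) := by
      have := mul_nonneg ht hv2.le
      rwa [div_mul_cancel₀ _ (ne_of_gt hv2)] at this
    have hc2 : c ^ 2 = 0 := le_antisymm (by linarith) (sq_nonneg c)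
    exact pow_eq_zero_iff (two_ne_zero) |>.mp hc2
  -- split S
  set T₁ : X := ∑ n ∈ Finset.Icc a (p - 3), α n • w (n + 1) with hT₁def
  set T₂ : X := ∑ n ∈ Finset.Icc p (j - 1), α n • w (n + 1) with hT₂def
  have hS : S = T₁ + α (p - 2) • w (p - 1) + α (p - 1) • w p + T₂ := by
    rw [hSdef, Icc_eq_Ioc,
      sum_Ioc_split _ (show a - 1 ≤ p - 3 by omega) (show p - 3 ≤ j - 1 by omega),
      sum_Ioc_split _ (show p - 3 ≤ p - 2 by omega) (show p - 2 ≤ j - 1 by omega),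
      sum_Ioc_split _ (show p - 2 ≤ p - 1 by omega) (show p - 1 ≤ j - 1 by omega)]
    have e1 : Finset.Ioc (p - 3) (p - 2) = {p - 2} := by
      rw [show p - 3 = p - 2 - 1 by ring, Ioc_pred_singleton]
    have e2 : Finset.Ioc (p - 2) (p - 1) = {p - 1} := by
      rw [show p - 2 = p - 1 - 1 by ring, Ioc_pred_singleton]
    rw [e1, e2, Finset.sum_singleton, Finset.sum_singleton,
      show p - 2 + 1 = p - 1 by ring, show p - 1 + 1 = p by ring,
      hT₁def, hT₂def, Icc_eq_Ioc, Icc_eq_Ioc]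
    abel
  -- γ relations
  have hα1 : α (p - 2) = γ (p - 1) - γ (p - 2) := by
    rw [hγ, hγ, show p - 1 - 1 = p - 2 by ring, show p - 2 - 1 = p - 3 by ring,
      Icc_eq_Ioc, Icc_eq_Ioc,
      sum_Ioc_split α (show a - 1 ≤ p - 3 by omega) (show p - 3 ≤ p - 2 by omega),
      show p - 3 = p - 2 - 1 by ring, Ioc_pred_singleton, Finset.sum_singleton]
    ring
  have hα2 : α (p - 1) = γ p - γ (p - 1) := by
    rw [hγ, hγ, show p - 1 - 1 = p - 2 by ring,
      Icc_eq_Ioc, Icc_eq_Ioc,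
      sum_Ioc_split α (show a - 1 ≤ p - 2 by omega) (show p - 2 ≤ p - 1 by omega),
      show p - 2 = p - 1 - 1 by ring, Ioc_pred_singleton, Finset.sum_singleton]
    ring
  -- key vector identity
  have hkey : γ (p - 1) • v = T₁ + T₂ + γ p • w p - γ (p - 2) • w (p - 1) - S := by
    rw [hS, hα1, hα2, hv]
    module
  -- inner ℝ with v
  have hinner : γ (p - 1) * ‖v‖ ^ 2 =
      (inner ℝ T₁ v : ℝ) + (inner ℝ T₂ v : ℝ) + γ p * (inner ℝ (w p) v : ℝ)
        - γ (p - 2) * (inner ℝ (w (p - 1)) v : ℝ) := by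
    have h := congrArg (fun z : X => (inner ℝ z v : ℝ)) hkey
    simp only [inner_add_left, inner_sub_left, real_inner_smul_left, hperp,
      real_inner_self_eq_norm_sq] at h
    linarith [h]
  set A : ℝ := ∑ n ∈ Finset.Icc a (p - 3), |α n| * ‖w (n + 1)‖ with hAdef
  set B : ℝ := ∑ n ∈ Finset.Icc p (j - 1), |α n| * ‖w (n + 1)‖ with hBdef
  have hT1 : |(inner ℝ T₁ v : ℝ)| ≤ A * ‖v‖ := by
    rw [hT₁def, sum_inner, hAdef, Finset.sum_mul]
    refine (Finset.abs_sum_le_sum_abs _ _).trans (Finset.sum_le_sum fun i _ => ?_)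
    rw [real_inner_smul_left, abs_mul, mul_assoc]
    exact mul_le_mul_of_nonneg_left (abs_real_inner_le_norm _ _) (abs_nonneg _)
  have hT2 : |(inner ℝ T₂ v : ℝ)| ≤ B * ‖v‖ := by
    rw [hT₂def, sum_inner, hBdef, Finset.sum_mul]
    refine (Finset.abs_sum_le_sum_abs _ _).trans (Finset.sum_le_sum fun i _ => ?_)
    rw [real_inner_smul_left, abs_mul, mul_assoc]
    exact mul_le_mul_of_nonneg_left (abs_real_inner_le_norm _ _) (abs_nonneg _)
  set R : ℝ := A + |γ (p - 2)| * ‖w (p - 1)‖ + |γ p| * ‖w p‖ + B with hRdef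
  have hbound : |γ (p - 1)| * ‖v‖ ≤ R := by
    have h1 : |γ (p - 1)| * ‖v‖ ^ 2 ≤ R * ‖v‖ := by
      calc |γ (p - 1)| * ‖v‖ ^ 2 = |γ (p - 1) * ‖v‖ ^ 2| := by
            rw [abs_mul, abs_of_nonneg (by positivity : (0:ℝ) ≤ ‖v‖ ^ 2)]
        _ = |(inner ℝ T₁ v : ℝ) + (inner ℝ T₂ v : ℝ) + γ p * (inner ℝ (w p) v : ℝ)
              - γ (p - 2) * (inner ℝ (w (p - 1)) v : ℝ)| := by rw [hinner]
        _ ≤ |(inner ℝ T₁ v : ℝ)| + |(inner ℝ T₂ v : ℝ)| + |γ p| * |(inner ℝ (w p) v : ℝ)|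
              + |γ (p - 2)| * |(inner ℝ (w (p - 1)) v : ℝ)| := by
            rw [← abs_mul, ← abs_mul]
            have t1 := abs_sub ((inner ℝ T₁ v : ℝ) + (inner ℝ T₂ v : ℝ) + γ p * (inner ℝ (w p) v : ℝ))
              (γ (p - 2) * (inner ℝ (w (p - 1)) v : ℝ))
            have t2 := abs_add_le ((inner ℝ T₁ v : ℝ) + (inner ℝ T₂ v : ℝ)) (γ p * (inner ℝ (w p) v : ℝ))
            have t3 := abs_add_le (inner ℝ T₁ v : ℝ) (inner ℝ T₂ v : ℝ)
            linarith
        _ ≤ A * ‖v‖ + B * ‖v‖ + |γ p| * (‖w p‖ * ‖v‖)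
              + |γ (p - 2)| * (‖w (p - 1)‖ * ‖v‖) := by
            gcongr
            · exact abs_real_inner_le_norm _ _
            · exact abs_real_inner_le_norm _ _
        _ = R * ‖v‖ := by rw [hRdef]; ring
    have h2 : |γ (p - 1)| * ‖v‖ * ‖v‖ ≤ R * ‖v‖ := by
      calc |γ (p - 1)| * ‖v‖ * ‖v‖ = |γ (p - 1)| * ‖v‖ ^ 2 := by ring
        _ ≤ R * ‖v‖ := h1
    exact le_of_mul_le_mul_right h2 hvnorm
  -- reindex the sums in the goal
  have hA : ∑ n ∈ Finset.Icc (j - (m : ℤ)) (p - 2), |α (n - 1)| * ‖w n‖ = A := by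
    rw [hAdef, show j - (m : ℤ) = a + 1 by rw [ha]; ring, show p - 2 = (p - 3) + 1 by ring,
      ← Finset.map_add_right_Icc, Finset.sum_map]
    refine Finset.sum_congr rfl fun i _ => ?_
    simp [addRightEmbedding_apply]
  have hB : ∑ n ∈ Finset.Icc (p + 1) j, |α (n - 1)| * ‖w n‖ = B := by
    have hmap : Finset.Icc (p + 1) j = (Finset.Icc p (j - 1)).map (addRightEmbedding 1) := by
      rw [Finset.map_add_right_Icc]
      congr 1
      ring
    rw [hmap, Finset.sum_map, hBdef]
    refine Finset.sum_congr rfl fun i _ => ?_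
    simp [addRightEmbedding_apply]
  rw [hA, hB]
  have hγe : |γ (p - 1)| * ((1 - κ) * ‖x (p - 1) - x (p - 2)‖) ≤ R := by
    calc |γ (p - 1)| * ((1 - κ) * ‖x (p - 1) - x (p - 2)‖)
        ≤ |γ (p - 1)| * ‖v‖ := mul_le_mul_of_nonneg_left hcontr (abs_nonneg _)
      _ ≤ R := hbound
  calc |γ (p - 1)| * ‖x (p - 1) - x (p - 2)‖
      = (1 - κ)⁻¹ * (|γ (p - 1)| * ((1 - κ) * ‖x (p - 1) - x (p - 2)‖)) := by
        field_simp
    _ ≤ (1 - κ)⁻¹ * R := mul_le_mul_of_nonneg_left hγe (inv_nonneg.mpr hκpos.le)
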